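/- Let G be a simple connected graph on n vertices with edge connectivity κ′(G) ≤ k, where 1 ≤ k ≤ n−1. Then SO(G) ≤ k√(k² + (n−1)²) + k(n−k−1)√((n−1)² + (n−2)²) + (√2/2)·k(k−1)(n−1) + (√2/2)·(n−k−1)(n−k−2)(n−2), with equality if and only if G ≅ K_n^k. -/

import Mathlib

/-- The Sombor index of a finite simple graph:
`SO(G) = Σ_{uv ∈ E(G)} √(d(u)² + d(v)²)`. -/
noncomputable def somborIndex {V : Type*} [Fintype V] (G : SimpleGraph V) : ℝ := by
  classical
  exact ∑ e ∈ G.edgeFinset,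
    Sym2.lift ⟨fun u v => Real.sqrt ((G.degree u : ℝ)^2 + (G.degree v : ℝ)^2),
      fun u v => by simp [add_comm]⟩ e

/-- The graph `K_n^k = K_1 ∨ K_k ∨ K_{n−k−1}` on `Fin n`: vertex `0` is the `K_1`
(adjacent exactly to vertices `1,…,k`), vertices `1,…,k` form `K_k` (adjacent to
everything), and vertices `k+1,…,n−1` form `K_{n−k−1}` (adjacent to everything
except `0`). -/
def Knk (n k : ℕ) : SimpleGraph (Fin n) where
  Adj u v := u ≠ v ∧ (u.val = 0 → v.val ≤ k) ∧ (v.val = 0 → u.val ≤ k)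
  symm := ⟨fun u v h => ⟨h.1.symm, h.2.2, h.2.1⟩⟩
  loopless := ⟨fun u h => h.1 rfl⟩

/-- The value of the Sombor index of `K_n^k`. -/
noncomputable def knkValue (n k : ℕ) : ℝ :=
  (k : ℝ) * Real.sqrt ((k : ℝ) ^ 2 + ((n : ℝ) - 1) ^ 2) +
    (k : ℝ) * ((n : ℝ) - k - 1) * Real.sqrt (((n : ℝ) - 1) ^ 2 + ((n : ℝ) - 2) ^ 2) +
    Real.sqrt 2 / 2 * k * ((k : ℝ) - 1) * ((n : ℝ) - 1) +
    Real.sqrt 2 / 2 * ((n : ℝ) - k - 1) * ((n : ℝ) - k - 2) * ((n : ℝ) - 2)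

/-- The vertex connectivity of `G` is at most `k`: either `G` has at most `k+1`
vertices, or some set of at most `k` vertices disconnects `G`. -/
def vertexConnAtMost {V : Type*} [Fintype V] (G : SimpleGraph V) (k : ℕ) : Prop :=
  Fintype.card V ≤ k + 1 ∨
    ∃ S : Finset V, S.card ≤ k ∧ ¬ (G.induce ((↑S : Set V)ᶜ)).Connected

/-- The edge connectivity of `G` is at most `k`: some set of at most `k` edges
of `G` disconnects `G`. -/
def edgeConnAtMost {V : Type*} [Fintype V] (G : SimpleGraph V) (k : ℕ) : Prop :=
  ∃ F : Set (Sym2 V), F ⊆ G.edgeSet ∧ Nat.card F ≤ k ∧ ¬ (G.deleteEdges F).Connected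

open Finset

section Helpers


noncomputable def sw {V : Type*} [Fintype V] (G : SimpleGraph V) [DecidableRel G.Adj] :
    Sym2 V → ℝ :=
  Sym2.lift ⟨fun u v => Real.sqrt ((G.degree u : ℝ)^2 + (G.degree v : ℝ)^2),
      fun u v => by simp [add_comm]⟩

lemma somborIndex_def {V : Type*} [Fintype V] (G : SimpleGraph V) [DecidableRel G.Adj] :
    somborIndex G = ∑ e ∈ G.edgeFinset, sw G e := by
  unfold somborIndex sw
  congr!

lemma sw_nonneg {V : Type*} [Fintype V] (G : SimpleGraph V) [DecidableRel G.Adj] (e : Sym2 V) :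
    0 ≤ sw G e := by
  induction e with
  | _ u v => exact Real.sqrt_nonneg _

lemma degree_mono {V : Type*} [Fintype V] {G H : SimpleGraph V} [DecidableRel G.Adj]
    [DecidableRel H.Adj] (h : G ≤ H) (v : V) : G.degree v ≤ H.degree v := by
  apply Finset.card_le_card
  intro w hw
  simp only [SimpleGraph.mem_neighborFinset] at hw ⊢
  exact h hw

lemma sw_mono {V : Type*} [Fintype V] {G H : SimpleGraph V} [DecidableRel G.Adj]
    [DecidableRel H.Adj] (h : G ≤ H) (e : Sym2 V) : sw G e ≤ sw H e := by
  induction e with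
  | _ u v =>
    simp only [sw, Sym2.lift_mk]
    apply Real.sqrt_le_sqrt
    have h1 := degree_mono h u
    have h2 := degree_mono h v
    have g1 : (0:ℝ) ≤ G.degree u := by positivity
    have g2 : (0:ℝ) ≤ G.degree v := by positivity
    have c1 : (G.degree u : ℝ) ≤ H.degree u := by exact_mod_cast h1
    have c2 : (G.degree v : ℝ) ≤ H.degree v := by exact_mod_cast h2
    nlinarith

lemma sombor_mono {V : Type*} [Fintype V] {G H : SimpleGraph V} (h : G ≤ H) :
    somborIndex G ≤ somborIndex H := by
  classical
  rw [somborIndex_def, somborIndex_def]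
  calc ∑ e ∈ G.edgeFinset, sw G e ≤ ∑ e ∈ G.edgeFinset, sw H e :=
        Finset.sum_le_sum fun e _ => sw_mono h e
    _ ≤ ∑ e ∈ H.edgeFinset, sw H e :=
        Finset.sum_le_sum_of_subset_of_nonneg (SimpleGraph.edgeFinset_mono h)
          (fun e _ _ => sw_nonneg H e)

lemma sw_pos_of_mem {V : Type*} [Fintype V] (H : SimpleGraph V) [DecidableRel H.Adj]
    {e : Sym2 V} (he : e ∈ H.edgeFinset) : 0 < sw H e := by
  induction e with
  | _ u v =>
    rw [SimpleGraph.mem_edgeFinset, SimpleGraph.mem_edgeSet] at he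
    have h1 : 0 < H.degree u := H.degree_pos_iff_exists_adj u |>.2 ⟨v, he⟩
    simp only [sw, Sym2.lift_mk]
    apply Real.sqrt_pos.2
    have : (0:ℝ) < H.degree u := by exact_mod_cast h1
    positivity

lemma sombor_strict_mono {V : Type*} [Fintype V] {G H : SimpleGraph V} (h : G ≤ H)
    (hne : G ≠ H) : somborIndex G < somborIndex H := by
  classical
  rw [somborIndex_def, somborIndex_def]
  have hsub : G.edgeFinset ⊆ H.edgeFinset := SimpleGraph.edgeFinset_mono h
  have hssub : G.edgeFinset ⊂ H.edgeFinset := by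
    refine ⟨hsub, fun hcon => hne ?_⟩
    have : H ≤ G := SimpleGraph.edgeFinset_subset_edgeFinset.1 hcon
    exact le_antisymm h this
  obtain ⟨e, heH, heG⟩ := Finset.exists_of_ssubset hssub
  calc ∑ e ∈ G.edgeFinset, sw G e ≤ ∑ e ∈ G.edgeFinset, sw H e :=
        Finset.sum_le_sum fun e _ => sw_mono h e
    _ < ∑ e ∈ H.edgeFinset, sw H e := by
        apply Finset.sum_lt_sum_of_subset hsub heH heG (sw_pos_of_mem H heH)
        exact fun e _ _ => sw_nonneg H e


lemma handshake {V : Type*} [Fintype V] [DecidableEq V] (G : SimpleGraph V)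
    [DecidableRel G.Adj] (f : Sym2 V → ℝ) :
    2 * ∑ e ∈ G.edgeFinset, f e = ∑ v, ∑ w ∈ G.neighborFinset v, f s(v, w) := by
  have key : ∑ d : G.Dart, f d.edge = 2 * ∑ e ∈ G.edgeFinset, f e := by
    have h1 := Finset.sum_fiberwise_of_maps_to (s := (univ : Finset G.Dart))
      (t := G.edgeFinset) (g := SimpleGraph.Dart.edge)
      (fun d _ => (SimpleGraph.mem_edgeFinset).2 d.edge_mem) (fun d => f d.edge)
    rw [← h1, Finset.mul_sum]
    apply Finset.sum_congr rfl
    intro e he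
    have hcard : #{d : G.Dart | d.edge = e} = 2 :=
      G.dart_edge_fiber_card e (SimpleGraph.mem_edgeFinset.1 he)
    have heq : ∑ d ∈ ({d : G.Dart | d.edge = e} : Finset _), f d.edge
        = ∑ _d ∈ ({d : G.Dart | d.edge = e} : Finset _), f e := by
      apply Finset.sum_congr rfl
      intro d hd
      rw [Finset.mem_filter] at hd
      rw [hd.2]
    rw [heq, Finset.sum_const, hcard]
    push_cast
    ring
  have key2 : ∑ d : G.Dart, f d.edge = ∑ v, ∑ w ∈ G.neighborFinset v, f s(v, w) := by
    have h1 := Finset.sum_fiberwise_of_maps_to (s := (univ : Finset G.Dart))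
      (t := (univ : Finset V)) (g := fun d => d.fst)
      (fun d _ => Finset.mem_univ d.fst) (fun d => f d.edge)
    rw [← h1]
    apply Finset.sum_congr rfl
    intro v _
    rw [show ({d : G.Dart | d.fst = v} : Finset _) = univ.image (G.dartOfNeighborSet v) from
      G.dart_fst_fiber v]
    rw [Finset.sum_image (fun x _ y _ h => G.dartOfNeighborSet_injective v h)]
    have : ∀ x : G.neighborSet v, f (G.dartOfNeighborSet v x).edge = f s(v, (x : V)) := by
      intro x; rfl
    rw [Finset.sum_congr rfl (fun x _ => this x)]
    rw [Finset.sum_set_coe (f := fun w => f s(v, w)) (s := G.neighborSet v)]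
    apply Finset.sum_congr _ (fun _ _ => rfl)
    ext w
    simp
  rw [← key, key2]

lemma iso_degree {V W : Type*} [Fintype V] [Fintype W] {G : SimpleGraph V}
    {G' : SimpleGraph W} [DecidableRel G.Adj] [DecidableRel G'.Adj]
    (φ : G ≃g G') (v : V) : G'.degree (φ v) = G.degree v := by
  rw [← SimpleGraph.card_neighborSet_eq_degree, ← SimpleGraph.card_neighborSet_eq_degree]
  exact (Fintype.card_congr (φ.mapNeighborSet v)).symm

lemma sombor_iso {V W : Type*} [Fintype V] [Fintype W] {G : SimpleGraph V}
    {G' : SimpleGraph W} (φ : G ≃g G') : somborIndex G = somborIndex G' := by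
  classical
  rw [somborIndex_def, somborIndex_def]
  apply Finset.sum_nbij' (i := fun e => e.map φ) (j := fun e => e.map φ.symm)
  · intro e he
    induction e with
    | _ u v =>
      simp only [SimpleGraph.mem_edgeFinset, SimpleGraph.mem_edgeSet] at he ⊢
      simpa using φ.map_adj_iff.2 he
  · intro e he
    induction e with
    | _ u v =>
      simp only [SimpleGraph.mem_edgeFinset, SimpleGraph.mem_edgeSet] at he ⊢
      simp only [Sym2.map_pair_eq, SimpleGraph.mem_edgeSet]
      exact φ.symm.map_adj_iff.2 he
  · intro e _
    induction e with
    | _ u v => simp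
  · intro e _
    induction e with
    | _ u v => simp
  · intro e _
    induction e with
    | _ u v =>
      simp only [sw, Sym2.map_pair_eq, Sym2.lift_mk]
      rw [iso_degree φ u, iso_degree φ v]


instance (n k : ℕ) : DecidableRel (Knk n k).Adj := fun u v =>
  decidable_of_iff (u ≠ v ∧ (u.val = 0 → v.val ≤ k) ∧ (v.val = 0 → u.val ≤ k)) Iff.rfl

lemma knk_adj {n k : ℕ} (u v : Fin n) :
    (Knk n k).Adj u v ↔ u.val ≠ v.val ∧ (u.val = 0 → v.val ≤ k) ∧ (v.val = 0 → u.val ≤ k) := by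
  constructor
  · rintro ⟨h1, h2, h3⟩
    exact ⟨fun h => h1 (Fin.ext h), h2, h3⟩
  · rintro ⟨h1, h2, h3⟩
    exact ⟨fun h => h1 (by rw [h]), h2, h3⟩

lemma card_filter_fin (n : ℕ) (P : ℕ → Prop) [DecidablePred P] :
    #((univ : Finset (Fin n)).filter (fun v => P v.val)) = #((range n).filter P) := by
  rw [Finset.card_filter, Finset.card_filter]
  exact Fin.sum_univ_eq_sum_range (fun i => if P i then 1 else 0) n

lemma sum_fin_val {n : ℕ} (f : ℕ → ℝ) :
    ∑ v : Fin n, f v.val = ∑ i ∈ range n, f i :=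
  Fin.sum_univ_eq_sum_range f n

lemma knk_degree {n k : ℕ} (hk : 1 ≤ k) (hkn : k + 1 ≤ n) (u : Fin n) :
    (Knk n k).degree u =
      if u.val = 0 then k else if u.val ≤ k then n - 1 else n - 2 := by
  rw [← SimpleGraph.card_neighborFinset_eq_degree]
  rw [SimpleGraph.neighborFinset_eq_filter]
  have : ∀ v : Fin n, (Knk n k).Adj u v ↔
      (fun j => u.val ≠ j ∧ (u.val = 0 → j ≤ k) ∧ (j = 0 → u.val ≤ k)) v.val := by
    intro v; exact knk_adj u v
  rw [Finset.filter_congr (fun v _ => by rw [this v])]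
  rw [card_filter_fin n (fun j => u.val ≠ j ∧ (u.val = 0 → j ≤ k) ∧ (j = 0 → u.val ≤ k))]
  by_cases h0 : u.val = 0
  · rw [if_pos h0]
    have : (range n).filter (fun j => u.val ≠ j ∧ (u.val = 0 → j ≤ k) ∧ (j = 0 → u.val ≤ k))
        = Icc 1 k := by
      ext j; simp only [mem_filter, mem_range, mem_Icc]; omega
    rw [this, Nat.card_Icc]
    omega
  · by_cases h1 : u.val ≤ k
    · rw [if_neg h0, if_pos h1]
      have : (range n).filter (fun j => u.val ≠ j ∧ (u.val = 0 → j ≤ k) ∧ (j = 0 → u.val ≤ k))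
          = (range n).erase u.val := by
        ext j; simp only [mem_filter, mem_range, mem_erase]; omega
      rw [this, Finset.card_erase_of_mem (by simp [u.isLt]), Finset.card_range]
    · rw [if_neg h0, if_neg h1]
      have : (range n).filter (fun j => u.val ≠ j ∧ (u.val = 0 → j ≤ k) ∧ (j = 0 → u.val ≤ k))
          = ((range n).erase u.val).erase 0 := by
        ext j; simp only [mem_filter, mem_range, mem_erase]; omega
      rw [this, Finset.card_erase_of_mem (by simp only [mem_erase, mem_range]; omega),
        Finset.card_erase_of_mem (by simp [u.isLt]), Finset.card_range]
      omega

section knkval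
variable (n k : ℕ)

/-- degree as a real-valued function of the `val` -/
noncomputable def gdeg (n k : ℕ) : ℕ → ℝ := fun i =>
  if i = 0 then (k : ℝ) else if i ≤ k then (n : ℝ) - 1 else (n : ℝ) - 2


lemma sqrt_sq_add_sq_self (x : ℝ) (hx : 0 ≤ x) : Real.sqrt (x^2 + x^2) = Real.sqrt 2 * x := by
  rw [show x^2+x^2 = 2*x^2 by ring, Real.sqrt_mul (by norm_num), Real.sqrt_sq hx]

lemma sombor_knk (hk : 1 ≤ k) (hkn : k + 1 ≤ n) :
    somborIndex (Knk n k) = knkValue n k := by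
  have hn2 : 2 ≤ n := by omega
  have hn2' : (2:ℝ) ≤ (n:ℝ) := by exact_mod_cast hn2
  have hdeg : ∀ u : Fin n, (((Knk n k).degree u : ℝ)) = gdeg n k u.val := by
    intro u
    rw [knk_degree hk hkn u, gdeg]
    split_ifs
    · rfl
    · rw [Nat.cast_sub (by omega)]; norm_num
    · rw [Nat.cast_sub (by omega)]; norm_num
  have hsw : ∀ u v : Fin n, sw (Knk n k) s(u, v)
      = Real.sqrt ((gdeg n k u.val) ^ 2 + (gdeg n k v.val) ^ 2) := by
    intro u v
    simp only [sw, Sym2.lift_mk]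
    rw [hdeg u, hdeg v]
  have key : 2 * somborIndex (Knk n k) =
      ∑ i ∈ range n, ∑ j ∈ range n,
        (if (i ≠ j ∧ (i = 0 → j ≤ k) ∧ (j = 0 → i ≤ k))
          then Real.sqrt ((gdeg n k i) ^ 2 + (gdeg n k j) ^ 2) else 0) := by
    rw [somborIndex_def, handshake]
    have inner : ∀ u : Fin n, ∑ w ∈ (Knk n k).neighborFinset u, sw (Knk n k) s(u, w)
        = ∑ j ∈ range n,
          (if (u.val ≠ j ∧ (u.val = 0 → j ≤ k) ∧ (j = 0 → u.val ≤ k))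
            then Real.sqrt ((gdeg n k u.val) ^ 2 + (gdeg n k j) ^ 2) else 0) := by
      intro u
      rw [SimpleGraph.neighborFinset_eq_filter, Finset.sum_filter]
      rw [← sum_fin_val (fun j =>
        if (u.val ≠ j ∧ (u.val = 0 → j ≤ k) ∧ (j = 0 → u.val ≤ k))
          then Real.sqrt ((gdeg n k u.val) ^ 2 + (gdeg n k j) ^ 2) else 0)]
      apply Finset.sum_congr rfl
      intro v _
      by_cases hadj : (Knk n k).Adj u v
      · rw [if_pos hadj, if_pos ((knk_adj u v).1 hadj), hsw]
      · rw [if_neg hadj, if_neg (fun hc => hadj ((knk_adj u v).2 hc))]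
    rw [Finset.sum_congr rfl (fun u _ => inner u)]
    exact sum_fin_val (fun i => ∑ j ∈ range n,
      (if (i ≠ j ∧ (i = 0 → j ≤ k) ∧ (j = 0 → i ≤ k))
        then Real.sqrt ((gdeg n k i) ^ 2 + (gdeg n k j) ^ 2) else 0))
  set x0 : ℝ := Real.sqrt ((k : ℝ) ^ 2 + ((n : ℝ) - 1) ^ 2) with hx0
  set x12 : ℝ := Real.sqrt (((n : ℝ) - 1) ^ 2 + ((n : ℝ) - 2) ^ 2) with hx12
  have hsplit : range n = ({0} ∪ Icc 1 k) ∪ Ico (k+1) n := by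
    ext j; simp only [mem_union, mem_range, mem_singleton, mem_Icc, mem_Ico]; omega
  have hd1 : Disjoint ({0} : Finset ℕ) (Icc 1 k) := by
    simp only [Finset.disjoint_left, mem_singleton, mem_Icc]; omega
  have hd2 : Disjoint (({0} : Finset ℕ) ∪ Icc 1 k) (Ico (k+1) n) := by
    simp only [Finset.disjoint_left, mem_union, mem_singleton, mem_Icc, mem_Ico]; omega
  have g0 : gdeg n k 0 = (k : ℝ) := by simp [gdeg]
  have g1 : ∀ j, 1 ≤ j → j ≤ k → gdeg n k j = (n : ℝ) - 1 := by
    intro j h1 h2; simp only [gdeg]; rw [if_neg (by omega), if_pos h2]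
  have g2 : ∀ j, k + 1 ≤ j → gdeg n k j = (n : ℝ) - 2 := by
    intro j h1; simp only [gdeg]; rw [if_neg (by omega), if_neg (by omega)]
  have hkcast : ((k + 1 - 1 : ℕ) : ℝ) = (k : ℝ) := by
    rw [Nat.cast_sub (by omega)]; push_cast; ring
  have hIcocast : ((n - (k + 1) : ℕ) : ℝ) = (n:ℝ) - ((k:ℝ)+1) := by
    rw [Nat.cast_sub (by omega)]; push_cast; ring
  have inner_eval : ∀ i ∈ range n,
      (∑ j ∈ range n, (if (i ≠ j ∧ (i = 0 → j ≤ k) ∧ (j = 0 → i ≤ k))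
          then Real.sqrt ((gdeg n k i) ^ 2 + (gdeg n k j) ^ 2) else 0)) =
      (if i = 0 then (k : ℝ) * x0
       else if i ≤ k then
         Real.sqrt (((n:ℝ)-1) ^ 2 + (k:ℝ) ^ 2) + ((k:ℝ) - 1) * (Real.sqrt 2 * ((n:ℝ)-1))
           + ((n:ℝ) - ((k:ℝ)+1)) * x12
       else (k:ℝ) * Real.sqrt (((n:ℝ)-2) ^ 2 + ((n:ℝ)-1) ^ 2)
           + (((n:ℝ) - ((k:ℝ)+1)) - 1) * (Real.sqrt 2 * ((n:ℝ)-2))) := by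
    intro i hi
    rw [mem_range] at hi
    rw [hsplit, Finset.sum_union hd2, Finset.sum_union hd1, Finset.sum_singleton]
    by_cases h0 : i = 0
    · subst h0
      rw [if_pos rfl, if_neg (by omega)]
      have hpt1 : ∀ j ∈ Icc 1 k, (if ((0:ℕ) ≠ j ∧ ((0:ℕ) = 0 → j ≤ k) ∧ (j = 0 → 0 ≤ k))
          then Real.sqrt ((gdeg n k 0) ^ 2 + (gdeg n k j) ^ 2) else 0) = x0 := by
        intro j hj
        rw [mem_Icc] at hj
        rw [if_pos (by omega), g0, g1 j hj.1 hj.2]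
      have hpt2 : ∀ j ∈ Ico (k+1) n, (if ((0:ℕ) ≠ j ∧ ((0:ℕ) = 0 → j ≤ k) ∧ (j = 0 → 0 ≤ k))
          then Real.sqrt ((gdeg n k 0) ^ 2 + (gdeg n k j) ^ 2) else 0) = 0 := by
        intro j hj
        rw [mem_Ico] at hj
        rw [if_neg (by omega)]
      rw [Finset.sum_congr rfl hpt1, Finset.sum_congr rfl hpt2,
        Finset.sum_const, Finset.sum_const, Nat.card_Icc, hkcast.symm]
      simp
    · by_cases h1 : i ≤ k
      · rw [if_neg h0, if_pos h1]
        have e0 : (if (i ≠ 0 ∧ (i = 0 → (0:ℕ) ≤ k) ∧ ((0:ℕ) = 0 → i ≤ k))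
            then Real.sqrt ((gdeg n k i) ^ 2 + (gdeg n k 0) ^ 2) else 0)
            = Real.sqrt (((n:ℝ)-1) ^ 2 + (k:ℝ) ^ 2) := by
          rw [if_pos (by omega), g0, g1 i (by omega) h1]
        have hpt1 : ∀ j ∈ Icc 1 k, (if (i ≠ j ∧ (i = 0 → j ≤ k) ∧ (j = 0 → i ≤ k))
            then Real.sqrt ((gdeg n k i) ^ 2 + (gdeg n k j) ^ 2) else 0)
            = (Real.sqrt 2 * ((n:ℝ)-1)) - (if j = i then (Real.sqrt 2 * ((n:ℝ)-1)) else 0) := by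
          intro j hj
          rw [mem_Icc] at hj
          by_cases hji : j = i
          · rw [if_neg (by omega), if_pos hji]; ring
          · rw [if_pos (by omega), if_neg hji, g1 i (by omega) h1, g1 j hj.1 hj.2,
              sqrt_sq_add_sq_self _ (by linarith)]
            ring
        have hpt2 : ∀ j ∈ Ico (k+1) n, (if (i ≠ j ∧ (i = 0 → j ≤ k) ∧ (j = 0 → i ≤ k))
            then Real.sqrt ((gdeg n k i) ^ 2 + (gdeg n k j) ^ 2) else 0) = x12 := by
          intro j hj
          rw [mem_Ico] at hj
          rw [if_pos (by omega), g1 i (by omega) h1, g2 j hj.1]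
        rw [e0, Finset.sum_congr rfl hpt1, Finset.sum_congr rfl hpt2,
          Finset.sum_sub_distrib, Finset.sum_const, Finset.sum_const,
          Finset.sum_ite_eq' (Icc 1 k) i, if_pos (by rw [mem_Icc]; omega),
          Nat.card_Icc, Nat.card_Ico, nsmul_eq_mul, nsmul_eq_mul, hkcast, hIcocast]
        ring
      · rw [if_neg h0, if_neg h1]
        have e0 : (if (i ≠ 0 ∧ (i = 0 → (0:ℕ) ≤ k) ∧ ((0:ℕ) = 0 → i ≤ k))
            then Real.sqrt ((gdeg n k i) ^ 2 + (gdeg n k 0) ^ 2) else 0) = 0 := by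
          rw [if_neg (by omega)]
        have hpt1 : ∀ j ∈ Icc 1 k, (if (i ≠ j ∧ (i = 0 → j ≤ k) ∧ (j = 0 → i ≤ k))
            then Real.sqrt ((gdeg n k i) ^ 2 + (gdeg n k j) ^ 2) else 0)
            = Real.sqrt (((n:ℝ)-2) ^ 2 + ((n:ℝ)-1) ^ 2) := by
          intro j hj
          rw [mem_Icc] at hj
          rw [if_pos (by omega), g2 i (by omega), g1 j hj.1 hj.2]
        have hpt2 : ∀ j ∈ Ico (k+1) n, (if (i ≠ j ∧ (i = 0 → j ≤ k) ∧ (j = 0 → i ≤ k))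
            then Real.sqrt ((gdeg n k i) ^ 2 + (gdeg n k j) ^ 2) else 0)
            = (Real.sqrt 2 * ((n:ℝ)-2)) - (if j = i then (Real.sqrt 2 * ((n:ℝ)-2)) else 0) := by
          intro j hj
          rw [mem_Ico] at hj
          by_cases hji : j = i
          · rw [if_neg (by omega), if_pos hji]; ring
          · rw [if_pos (by omega), if_neg hji, g2 i (by omega), g2 j hj.1,
              sqrt_sq_add_sq_self _ (by linarith)]
            ring
        rw [e0, Finset.sum_congr rfl hpt1, Finset.sum_congr rfl hpt2,
          Finset.sum_sub_distrib, Finset.sum_const, Finset.sum_const,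
          Finset.sum_ite_eq' (Ico (k+1) n) i, if_pos (by rw [mem_Ico]; omega),
          Nat.card_Icc, Nat.card_Ico, nsmul_eq_mul, nsmul_eq_mul, hkcast, hIcocast]
        ring
  rw [Finset.sum_congr rfl inner_eval] at key
  rw [hsplit, Finset.sum_union hd2, Finset.sum_union hd1, Finset.sum_singleton] at key
  have hpo1 : ∀ i ∈ Icc 1 k, (if i = 0 then (k : ℝ) * x0
       else if i ≤ k then
         Real.sqrt (((n:ℝ)-1) ^ 2 + (k:ℝ) ^ 2) + ((k:ℝ) - 1) * (Real.sqrt 2 * ((n:ℝ)-1))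
           + ((n:ℝ) - ((k:ℝ)+1)) * x12
       else (k:ℝ) * Real.sqrt (((n:ℝ)-2) ^ 2 + ((n:ℝ)-1) ^ 2)
           + (((n:ℝ) - ((k:ℝ)+1)) - 1) * (Real.sqrt 2 * ((n:ℝ)-2)))
      = Real.sqrt (((n:ℝ)-1) ^ 2 + (k:ℝ) ^ 2) + ((k:ℝ) - 1) * (Real.sqrt 2 * ((n:ℝ)-1))
           + ((n:ℝ) - ((k:ℝ)+1)) * x12 := by
    intro i hi
    rw [mem_Icc] at hi
    rw [if_neg (by omega), if_pos hi.2]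
  have hpo2 : ∀ i ∈ Ico (k+1) n, (if i = 0 then (k : ℝ) * x0
       else if i ≤ k then
         Real.sqrt (((n:ℝ)-1) ^ 2 + (k:ℝ) ^ 2) + ((k:ℝ) - 1) * (Real.sqrt 2 * ((n:ℝ)-1))
           + ((n:ℝ) - ((k:ℝ)+1)) * x12
       else (k:ℝ) * Real.sqrt (((n:ℝ)-2) ^ 2 + ((n:ℝ)-1) ^ 2)
           + (((n:ℝ) - ((k:ℝ)+1)) - 1) * (Real.sqrt 2 * ((n:ℝ)-2)))
      = (k:ℝ) * Real.sqrt (((n:ℝ)-2) ^ 2 + ((n:ℝ)-1) ^ 2)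
           + (((n:ℝ) - ((k:ℝ)+1)) - 1) * (Real.sqrt 2 * ((n:ℝ)-2)) := by
    intro i hi
    rw [mem_Ico] at hi
    rw [if_neg (by omega), if_neg (by omega)]
  rw [Finset.sum_congr rfl hpo1, Finset.sum_congr rfl hpo2, if_pos rfl,
    Finset.sum_const, Finset.sum_const, Nat.card_Icc, Nat.card_Ico,
    nsmul_eq_mul, nsmul_eq_mul, hkcast, hIcocast] at key
  have hsym1 : Real.sqrt (((n:ℝ)-1) ^ 2 + (k:ℝ) ^ 2) = x0 := by
    rw [hx0, add_comm]
  have hsym2 : Real.sqrt (((n:ℝ)-2) ^ 2 + ((n:ℝ)-1) ^ 2) = x12 := by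
    rw [hx12, add_comm]
  rw [hsym1, hsym2] at key
  have hfin : somborIndex (Knk n k) = (1/2) * (2 * somborIndex (Knk n k)) := by ring
  rw [hfin, key, knkValue]
  ring


end knkval

lemma knk_mono {n c k : ℕ} (h : c ≤ k) : Knk n c ≤ Knk n k := by
  intro u v hadj
  exact ⟨hadj.1, fun h0 => le_trans (hadj.2.1 h0) h, fun h0 => le_trans (hadj.2.2 h0) h⟩

lemma knk_ne {n c k : ℕ} (hc : c < k) (hk : k + 1 ≤ n) : Knk n c ≠ Knk n k := by
  intro heq
  have h1 : c + 1 < n := by omega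
  have h0 : 0 < n := by omega
  have hadj : (Knk n k).Adj ⟨0, h0⟩ ⟨c+1, h1⟩ :=
    ⟨Fin.ne_of_val_ne (show (0:ℕ) ≠ c + 1 by omega), fun _ => show c + 1 ≤ k by omega,
      fun h => absurd (show c + 1 = 0 from h) (by omega)⟩
  rw [← heq] at hadj
  have h3 : c + 1 ≤ c := hadj.2.1 rfl
  omega

/-- partition lemma : from a disconnecting edge set, get a vertex set A whose
crossing edges all lie in F -/
lemma partition_of_deleteEdges {V : Type*} [Fintype V] {G : SimpleGraph V}
    (hG : G.Connected) {F : Set (Sym2 V)}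
    (hdel : ¬ (G.deleteEdges F).Connected) :
    ∃ A : Set V, A.Nonempty ∧ Aᶜ.Nonempty ∧
      ∀ u v : V, G.Adj u v → u ∈ A → v ∉ A → s(u, v) ∈ F := by
  have hne : Nonempty V := hG.nonempty
  have hpre : ¬ (G.deleteEdges F).Preconnected := by
    intro hp
    exact hdel ⟨hp⟩
  rw [SimpleGraph.Preconnected] at hpre
  push_neg at hpre
  obtain ⟨u, v, huv⟩ := hpre
  refine ⟨{x | (G.deleteEdges F).Reachable u x}, ⟨u, by exact SimpleGraph.Reachable.refl u⟩, ⟨v, huv⟩, ?_⟩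
  intro a b hab ha hb
  by_contra hF
  apply hb
  exact ha.trans (SimpleGraph.Adj.reachable (by
    rw [SimpleGraph.deleteEdges_adj]
    exact ⟨hab, hF⟩))

/-- A graph which is complete away from a single vertex `x` is isomorphic to
`Knk n c` where `c` is the degree of `x`. -/
lemma singleton_iso {V : Type*} [Fintype V] [DecidableEq V] (H : SimpleGraph V)
    [DecidableRel H.Adj] (x : V)
    (hcomp : ∀ u v : V, u ≠ x → v ≠ x → u ≠ v → H.Adj u v) :
    Nonempty (H ≃g Knk (Fintype.card V) (H.degree x)) := by
  set n := Fintype.card V with hn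
  set c := H.degree x with hc
  set S := H.neighborFinset x with hS
  have hSc : #S = c := rfl
  have hxS : x ∉ S := by simp [hS]
  have hn0 : 0 < n := Fintype.card_pos_iff.2 ⟨x⟩
  have hSsub : S ⊆ univ.erase x := fun w hw => by
    simp only [mem_erase, mem_univ, and_true]
    intro hwx
    exact hxS (hwx ▸ hw)
  have hcn : c ≤ n - 1 := by
    have := Finset.card_le_card hSsub
    rwa [Finset.card_erase_of_mem (mem_univ x), Finset.card_univ, hSc] at this
  set T : Finset V := (univ.erase x) \ S with hT
  have hTmem : ∀ v : V, v ≠ x → v ∉ S → v ∈ T := by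
    intro v hvx hvS
    simp [hT, hvx, hvS]
  have hTcard : #T = n - 1 - c := by
    rw [hT, Finset.card_sdiff_of_subset hSsub, Finset.card_erase_of_mem (mem_univ x),
      Finset.card_univ, hSc]
  set eS := S.equivFin with heS
  set eT := T.equivFin with heT
  have hf : ∀ v : V, v ≠ x → (hv : v ∈ S) → ((eS ⟨v, hv⟩ : Fin #S)).val + 1 < n := by
    intro v _ hv
    have := (eS ⟨v, hv⟩).isLt
    omega
  classical
  let f : V → Fin n := fun v =>
    if hvx : v = x then ⟨0, hn0⟩
    else if hv : v ∈ S then ⟨(eS ⟨v, hv⟩).val + 1, by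
      have h1 := (eS ⟨v, hv⟩).isLt; omega⟩
    else ⟨(eT ⟨v, hTmem v hvx hv⟩).val + c + 1, by
      have h1 := (eT ⟨v, hTmem v hvx hv⟩).isLt; omega⟩
  have hfx : (f x).val = 0 := by simp [f]
  have hfS : ∀ v (hv : v ∈ S), (f v).val = (eS ⟨v, hv⟩).val + 1 := by
    intro v hv
    have hvx : v ≠ x := fun h => hxS (h ▸ hv)
    simp [f, hvx, hv]
  have hfSb : ∀ v, v ∈ S → 1 ≤ (f v).val ∧ (f v).val ≤ c := by
    intro v hv
    rw [hfS v hv]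
    have h1 := (eS ⟨v, hv⟩).isLt
    omega
  have hfT : ∀ v, v ≠ x → v ∉ S → c + 1 ≤ (f v).val := by
    intro v hvx hv
    simp only [f, dif_neg hvx, dif_neg hv]
    omega
  have hf0 : ∀ v, (f v).val = 0 → v = x := by
    intro v h0
    by_contra hvx
    by_cases hv : v ∈ S
    · have := hfSb v hv; omega
    · have := hfT v hvx hv; omega
  have hinj : Function.Injective f := by
    intro u v huv
    have hval : (f u).val = (f v).val := by rw [huv]
    by_cases hux : u = x
    · by_cases hvx : v = x
      · rw [hux, hvx]
      · exfalso
        rw [hux, hfx] at hval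
        exact hvx (hf0 v hval.symm)
    · by_cases hvx : v = x
      · exfalso
        rw [hvx, hfx] at hval
        exact hux (hf0 u hval)
      · by_cases huS : u ∈ S
        · by_cases hvS : v ∈ S
          · rw [hfS u huS, hfS v hvS] at hval
            have := eS.injective (Fin.ext (by omega : ((eS ⟨u, huS⟩ : Fin #S)).val = (eS ⟨v, hvS⟩ : Fin #S).val))
            exact Subtype.ext_iff.1 this
          · exfalso
            have h1 := hfSb u huS
            have h2 := hfT v hvx hvS
            omega
        · by_cases hvS : v ∈ S
          · exfalso
            have h1 := hfSb v hvS
            have h2 := hfT u hux huS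
            omega
          · simp only [f, dif_neg hux, dif_neg huS, dif_neg hvx, dif_neg hvS] at hval
            have := eT.injective (Fin.ext (by omega :
              ((eT ⟨u, hTmem u hux huS⟩ : Fin #T)).val = (eT ⟨v, hTmem v hvx hvS⟩ : Fin #T).val))
            exact Subtype.ext_iff.1 this
  have hbij : Function.Bijective f :=
    (Fintype.bijective_iff_injective_and_card f).2 ⟨hinj, by simp [hn]⟩
  let e : V ≃ Fin n := Equiv.ofBijective f hbij
  refine ⟨⟨e, ?_⟩⟩
  intro u v
  show (Knk n c).Adj (f u) (f v) ↔ H.Adj u v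
  have hadj_mem : ∀ w, w ∈ S ↔ H.Adj x w := by
    intro w; simp [hS]
  constructor
  · rintro ⟨hne', h1, h2⟩
    have hfufv : u ≠ v := fun h => hne' (by rw [h])
    by_cases hux : u = x
    · have hvx : v ≠ x := fun h => hfufv (hux.trans h.symm)
      have hfvc : (f v).val ≤ c := h1 (by rw [hux, hfx])
      by_cases hvS : v ∈ S
      · rw [hux]; exact (hadj_mem v).1 hvS
      · exact absurd hfvc (by have := hfT v hvx hvS; omega)
    · by_cases hvx : v = x
      · have hfuc : (f u).val ≤ c := h2 (by rw [hvx, hfx])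
        by_cases huS : u ∈ S
        · rw [hvx]; exact ((hadj_mem u).1 huS).symm
        · exact absurd hfuc (by have := hfT u hux huS; omega)
      · exact hcomp u v hux hvx hfufv
  · intro hadj
    have hfufv : u ≠ v := hadj.ne
    refine ⟨fun h => hfufv (hinj (Fin.ext (congrArg Fin.val h)) ), ?_, ?_⟩
    · intro h0
      have hux : u = x := hf0 u h0
      have hvS : v ∈ S := (hadj_mem v).2 (by rw [← hux]; exact hadj)
      exact (hfSb v hvS).2
    · intro h0
      have hvx : v = x := hf0 v h0
      have huS : u ∈ S := (hadj_mem u).2 (by rw [← hvx]; exact hadj.symm)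
      exact (hfSb u huS).2

/-- both endpoints in A, as a boolean predicate on Sym2 -/
def bothIn {V : Type*} [DecidableEq V] (A : Finset V) : Sym2 V → Bool :=
  Sym2.lift ⟨fun u v => decide (u ∈ A) && decide (v ∈ A), fun u v => Bool.and_comm _ _⟩

lemma bothIn_mk {V : Type*} [DecidableEq V] (A : Finset V) (u v : V) :
    bothIn A s(u, v) = true ↔ u ∈ A ∧ v ∈ A := by
  simp [bothIn]

lemma half_sqrt2_le (x y : ℝ) (hx : 0 ≤ x) (hy : 0 ≤ y) :
    Real.sqrt 2 / 2 * (x + y) ≤ Real.sqrt (x^2 + y^2) := by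
  have h2 : Real.sqrt 2 ^ 2 = 2 := Real.sq_sqrt (by norm_num)
  rw [show Real.sqrt 2 / 2 * (x + y) = Real.sqrt 2 * ((x+y)/2) by ring]
  apply Real.le_sqrt_of_sq_le
  rw [mul_pow, h2]
  nlinarith [sq_nonneg (x - y)]

lemma sw_le_of_deg_le {V : Type*} [Fintype V] (H : SimpleGraph V) [DecidableRel H.Adj]
    {u v : V} {M : ℕ} (hu : H.degree u ≤ M) (hv : H.degree v ≤ M) :
    sw H s(u, v) ≤ Real.sqrt 2 * (M : ℝ) := by
  simp only [sw, Sym2.lift_mk]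
  have hu' : (H.degree u : ℝ) ≤ (M : ℝ) := by exact_mod_cast hu
  have hv' : (H.degree v : ℝ) ≤ (M : ℝ) := by exact_mod_cast hv
  have h1 : ((H.degree u : ℝ))^2 + ((H.degree v : ℝ))^2 ≤ 2 * (M:ℝ)^2 := by
    have := (H.degree u).cast_nonneg (α := ℝ)
    have := (H.degree v).cast_nonneg (α := ℝ)
    nlinarith
  calc Real.sqrt (((H.degree u : ℝ))^2 + ((H.degree v : ℝ))^2)
      ≤ Real.sqrt (2 * (M:ℝ)^2) := Real.sqrt_le_sqrt h1
    _ = Real.sqrt 2 * (M : ℝ) := by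
        rw [Real.sqrt_mul (by norm_num), Real.sqrt_sq (by positivity)]

lemma card_bothIn_le {V : Type*} [Fintype V] [DecidableEq V] (H : SimpleGraph V)
    [DecidableRel H.Adj] (A : Finset V) :
    #(H.edgeFinset.filter (fun e => bothIn A e = true)) ≤ (#A).choose 2 := by
  rw [← Sym2.card_image_offDiag]
  apply Finset.card_le_card
  intro e he
  rw [Finset.mem_filter] at he
  induction e with
  | _ u v =>
    obtain ⟨huA, hvA⟩ := (bothIn_mk A u v).1 he.2
    have hne : u ≠ v := ((H.mem_edgeSet).1 (SimpleGraph.mem_edgeFinset.1 he.1)).ne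
    exact Finset.mem_image.2 ⟨(u, v), Finset.mem_offDiag.2 ⟨huA, hvA, hne⟩, rfl⟩

lemma knk_lower (n k : ℕ) (hk1 : 1 ≤ k) (hkn : k + 1 ≤ n) :
    Real.sqrt 2 / 2 * ((k:ℝ)*((k:ℝ)+(n:ℝ)-1) + (k:ℝ)*((n:ℝ)-(k:ℝ)-1)*(2*(n:ℝ)-3)
      + (k:ℝ)*((k:ℝ)-1)*((n:ℝ)-1) + ((n:ℝ)-(k:ℝ)-1)*((n:ℝ)-(k:ℝ)-2)*((n:ℝ)-2))
    ≤ knkValue n k := by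
  have hk1' : (1:ℝ) ≤ (k:ℝ) := by exact_mod_cast hk1
  have hkn' : (k:ℝ) + 1 ≤ (n:ℝ) := by exact_mod_cast hkn
  have hn2 : (2:ℝ) ≤ (n:ℝ) := by linarith
  have t1 : (k:ℝ) * (Real.sqrt 2 / 2 * ((k:ℝ) + ((n:ℝ)-1)))
      ≤ (k:ℝ) * Real.sqrt ((k:ℝ)^2 + ((n:ℝ)-1)^2) :=
    mul_le_mul_of_nonneg_left (half_sqrt2_le _ _ (by positivity) (by linarith)) (by positivity)
  have t2 : ((k:ℝ)*((n:ℝ)-(k:ℝ)-1)) * (Real.sqrt 2 / 2 * (((n:ℝ)-1) + ((n:ℝ)-2)))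
      ≤ ((k:ℝ)*((n:ℝ)-(k:ℝ)-1)) * Real.sqrt (((n:ℝ)-1)^2 + ((n:ℝ)-2)^2) := by
    apply mul_le_mul_of_nonneg_left (half_sqrt2_le _ _ (by linarith) (by linarith))
    have : (0:ℝ) ≤ (n:ℝ)-(k:ℝ)-1 := by linarith
    positivity
  rw [knkValue]
  nlinarith [t1, t2]

lemma ineq_branch1 (n k a : ℝ) (h2a : 2 ≤ a) (han : a ≤ n - 2) (hk1 : 1 ≤ k)
    (hkn : k ≤ n-1) (hak : a + k ≤ n) :
    a*(a-1)*(a-1+k)+(n-a)*(n-a-1)*(n-1)+2*k*(n-1)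
      < k*(k+n-1)+k*(n-k-1)*(2*n-3)+k*(k-1)*(n-1)+(n-k-1)*(n-k-2)*(n-2) := by
  nlinarith [mul_nonneg (mul_nonneg (sub_nonneg.2 h2a) (sub_nonneg.2 han)) (sub_nonneg.2 hk1),
    sq_nonneg (a-2), sq_nonneg (n-a-2), sq_nonneg (k-1), sq_nonneg (n-k-1),
    mul_pos (sub_pos.2 (by linarith : (1:ℝ) < a)) (sub_pos.2 (by linarith : a < n - 1))]

lemma ineq_branch2 (n k a : ℝ) (h2a : 2 ≤ a) (han : a ≤ n - 2) (hk1 : 1 ≤ k)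
    (hkn : k ≤ n-1) (hak : n ≤ a + k) :
    a*(a-1)*(n-1)+(n-a)*(n-a-1)*(n-1)+2*k*(n-1)
      < k*(k+n-1)+k*(n-k-1)*(2*n-3)+k*(k-1)*(n-1)+(n-k-1)*(n-k-2)*(n-2) := by
  nlinarith [sq_nonneg (a-2), sq_nonneg (n-a-2), sq_nonneg (k-1), sq_nonneg (n-k-1),
    mul_nonneg (sub_nonneg.2 h2a) (sub_nonneg.2 hkn)]


lemma crude_bound {V : Type*} [Fintype V] [DecidableEq V] (H : SimpleGraph V)
    [DecidableRel H.Adj] (A : Finset V) {n k : ℕ} (hcard : Fintype.card V = n)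
    (ha2 : 2 ≤ #A) (han : #A + 2 ≤ n) (hk1 : 1 ≤ k) (hkn : k + 1 ≤ n)
    (hdegA : ∀ u ∈ A, H.degree u ≤ #A - 1 + k)
    (hcross : #(H.edgeFinset.filter
      (fun e => ¬ bothIn A e = true ∧ ¬ bothIn Aᶜ e = true)) ≤ k) :
    somborIndex H < knkValue n k := by
  have hnV : Nonempty V := by
    rw [← Fintype.card_pos_iff, hcard]; omega
  have hdeg_all : ∀ u : V, H.degree u ≤ n - 1 := by
    intro u
    have := H.degree_lt_card_verts u
    omega
  set a := #A with ha
  have hb : #(Aᶜ) = n - a := by rw [Finset.card_compl, hcard]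
  -- the sum splits
  rw [somborIndex_def]
  rw [← Finset.sum_filter_add_sum_filter_not H.edgeFinset (fun e => bothIn A e = true) (sw H)]
  rw [← Finset.sum_filter_add_sum_filter_not
    (H.edgeFinset.filter (fun e => ¬ bothIn A e = true))
    (fun e => bothIn (Aᶜ) e = true) (sw H)]
  set f1 := H.edgeFinset.filter (fun e => bothIn A e = true) with hf1
  set f2 := (H.edgeFinset.filter (fun e => ¬ bothIn A e = true)).filter
    (fun e => bothIn (Aᶜ) e = true) with hf2
  set f3 := (H.edgeFinset.filter (fun e => ¬ bothIn A e = true)).filter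
    (fun e => ¬ bothIn (Aᶜ) e = true) with hf3
  have hf3card : #f3 ≤ k := by
    rw [hf3, Finset.filter_filter]
    exact hcross
  have hf1card : #f1 ≤ a.choose 2 := card_bothIn_le H A
  have hf2card : #f2 ≤ (n - a).choose 2 := by
    rw [← hb]
    calc #f2 ≤ #(H.edgeFinset.filter (fun e => bothIn (Aᶜ) e = true)) := by
          apply Finset.card_le_card
          rw [hf2, Finset.filter_filter]
          intro e he
          rw [Finset.mem_filter] at he ⊢
          exact ⟨he.1, he.2.2⟩
      _ ≤ (#(Aᶜ)).choose 2 := card_bothIn_le H (Aᶜ)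
  -- degree bounds depending on branch
  rcases le_or_gt (a - 1 + k) (n - 1) with hbr | hbr
  case _ =>
    -- branch 1 : M = a - 1 + k for A-internal edges
    have hs1 : ∑ e ∈ f1, sw H e ≤ (a.choose 2 : ℝ) * (Real.sqrt 2 * ((a - 1 + k : ℕ) : ℝ)) := by
      calc ∑ e ∈ f1, sw H e ≤ #f1 • (Real.sqrt 2 * ((a - 1 + k : ℕ) : ℝ)) := by
            apply Finset.sum_le_card_nsmul
            intro e he
            rw [hf1, Finset.mem_filter] at he
            induction e with
            | _ u v =>
              obtain ⟨hu, hv⟩ := (bothIn_mk A u v).1 he.2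
              exact sw_le_of_deg_le H (hdegA u hu) (hdegA v hv)
        _ ≤ (a.choose 2 : ℝ) * (Real.sqrt 2 * ((a - 1 + k : ℕ) : ℝ)) := by
            rw [nsmul_eq_mul]
            apply mul_le_mul_of_nonneg_right (by exact_mod_cast hf1card) (by positivity)
    have hs2 : ∑ e ∈ f2, sw H e ≤ ((n-a).choose 2 : ℝ) * (Real.sqrt 2 * ((n - 1 : ℕ) : ℝ)) := by
      calc ∑ e ∈ f2, sw H e ≤ #f2 • (Real.sqrt 2 * ((n - 1 : ℕ) : ℝ)) := by
            apply Finset.sum_le_card_nsmul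
            intro e he
            induction e with
            | _ u v => exact sw_le_of_deg_le H (hdeg_all u) (hdeg_all v)
        _ ≤ _ := by
            rw [nsmul_eq_mul]
            apply mul_le_mul_of_nonneg_right (by exact_mod_cast hf2card) (by positivity)
    have hs3 : ∑ e ∈ f3, sw H e ≤ (k : ℝ) * (Real.sqrt 2 * ((n - 1 : ℕ) : ℝ)) := by
      calc ∑ e ∈ f3, sw H e ≤ #f3 • (Real.sqrt 2 * ((n - 1 : ℕ) : ℝ)) := by
            apply Finset.sum_le_card_nsmul
            intro e he
            induction e with
            | _ u v => exact sw_le_of_deg_le H (hdeg_all u) (hdeg_all v)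
        _ ≤ _ := by
            rw [nsmul_eq_mul]
            apply mul_le_mul_of_nonneg_right (by exact_mod_cast hf3card) (by positivity)
    -- now the numeric part
    have hcasts : (a.choose 2 : ℝ) = (a:ℝ) * ((a:ℝ)-1) / 2 ∧
        ((n-a).choose 2 : ℝ) = ((n:ℝ)-(a:ℝ)) * (((n:ℝ)-(a:ℝ))-1) / 2 ∧
        ((a - 1 + k : ℕ) : ℝ) = (a:ℝ) - 1 + (k:ℝ) ∧ ((n - 1 : ℕ) : ℝ) = (n:ℝ) - 1 := by
      refine ⟨?_, ?_, ?_, ?_⟩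
      · rw [Nat.cast_choose_two]
      · rw [Nat.cast_choose_two, Nat.cast_sub (by omega)]
      · rw [Nat.cast_add, Nat.cast_sub (by omega)]; push_cast; ring
      · rw [Nat.cast_sub (by omega)]; push_cast; ring
    obtain ⟨hc1, hc2, hc3, hc4⟩ := hcasts
    have ha2' : (2:ℝ) ≤ (a:ℝ) := by exact_mod_cast ha2
    have han' : (a:ℝ) ≤ (n:ℝ) - 2 := by
      have : (a:ℝ) + 2 ≤ (n:ℝ) := by exact_mod_cast han
      linarith
    have hk1' : (1:ℝ) ≤ (k:ℝ) := by exact_mod_cast hk1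
    have hkn' : (k:ℝ) ≤ (n:ℝ) - 1 := by
      have : (k:ℝ) + 1 ≤ (n:ℝ) := by exact_mod_cast hkn
      linarith
    have hbr' : (a:ℝ) + (k:ℝ) ≤ (n:ℝ) := by
      have : a + k ≤ n := by omega
      exact_mod_cast this
    have hpoly : (a:ℝ)*((a:ℝ)-1)*((a:ℝ)-1+(k:ℝ))+((n:ℝ)-(a:ℝ))*((n:ℝ)-(a:ℝ)-1)*((n:ℝ)-1)
        +2*(k:ℝ)*((n:ℝ)-1)
        < (k:ℝ)*((k:ℝ)+(n:ℝ)-1)+(k:ℝ)*((n:ℝ)-(k:ℝ)-1)*(2*(n:ℝ)-3)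
          +(k:ℝ)*((k:ℝ)-1)*((n:ℝ)-1)+((n:ℝ)-(k:ℝ)-1)*((n:ℝ)-(k:ℝ)-2)*((n:ℝ)-2) := by
      exact ineq_branch1 (n:ℝ) (k:ℝ) (a:ℝ) ha2' han' hk1' hkn' hbr'
    have hs2pos : (0:ℝ) < Real.sqrt 2 := by positivity
    calc ∑ e ∈ f1, sw H e + (∑ e ∈ f2, sw H e + ∑ e ∈ f3, sw H e)
        ≤ (a.choose 2 : ℝ) * (Real.sqrt 2 * ((a - 1 + k : ℕ) : ℝ))
          + ((n-a).choose 2 : ℝ) * (Real.sqrt 2 * ((n - 1 : ℕ) : ℝ))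
          + (k : ℝ) * (Real.sqrt 2 * ((n - 1 : ℕ) : ℝ)) := by linarith
      _ = Real.sqrt 2 / 2 * ((a:ℝ)*((a:ℝ)-1)*((a:ℝ)-1+(k:ℝ))
          +((n:ℝ)-(a:ℝ))*((n:ℝ)-(a:ℝ)-1)*((n:ℝ)-1)+2*(k:ℝ)*((n:ℝ)-1)) := by
          rw [hc1, hc2, hc3, hc4]; ring
      _ < Real.sqrt 2 / 2 * ((k:ℝ)*((k:ℝ)+(n:ℝ)-1)+(k:ℝ)*((n:ℝ)-(k:ℝ)-1)*(2*(n:ℝ)-3)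
          +(k:ℝ)*((k:ℝ)-1)*((n:ℝ)-1)+((n:ℝ)-(k:ℝ)-1)*((n:ℝ)-(k:ℝ)-2)*((n:ℝ)-2)) := by
          apply mul_lt_mul_of_pos_left hpoly (by positivity)
      _ ≤ knkValue n k := knk_lower n k hk1 hkn
  case _ =>
    -- branch 2 : M = n - 1 everywhere
    have hsall : ∀ (f : Finset (Sym2 V)), ∑ e ∈ f, sw H e
        ≤ (#f : ℝ) * (Real.sqrt 2 * ((n - 1 : ℕ) : ℝ)) := by
      intro f
      calc ∑ e ∈ f, sw H e ≤ #f • (Real.sqrt 2 * ((n - 1 : ℕ) : ℝ)) := by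
            apply Finset.sum_le_card_nsmul
            intro e he
            induction e with
            | _ u v => exact sw_le_of_deg_le H (hdeg_all u) (hdeg_all v)
        _ = _ := by rw [nsmul_eq_mul]
    have hs1 : ∑ e ∈ f1, sw H e ≤ (a.choose 2 : ℝ) * (Real.sqrt 2 * ((n - 1 : ℕ) : ℝ)) :=
      le_trans (hsall f1) (mul_le_mul_of_nonneg_right (by exact_mod_cast hf1card) (by positivity))
    have hs2 : ∑ e ∈ f2, sw H e ≤ ((n-a).choose 2 : ℝ) * (Real.sqrt 2 * ((n - 1 : ℕ) : ℝ)) :=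
      le_trans (hsall f2) (mul_le_mul_of_nonneg_right (by exact_mod_cast hf2card) (by positivity))
    have hs3 : ∑ e ∈ f3, sw H e ≤ (k : ℝ) * (Real.sqrt 2 * ((n - 1 : ℕ) : ℝ)) :=
      le_trans (hsall f3) (mul_le_mul_of_nonneg_right (by exact_mod_cast hf3card) (by positivity))
    have hc1 : (a.choose 2 : ℝ) = (a:ℝ) * ((a:ℝ)-1) / 2 := by rw [Nat.cast_choose_two]
    have hc2 : ((n-a).choose 2 : ℝ) = ((n:ℝ)-(a:ℝ)) * (((n:ℝ)-(a:ℝ))-1) / 2 := by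
      rw [Nat.cast_choose_two, Nat.cast_sub (by omega)]
    have hc4 : ((n - 1 : ℕ) : ℝ) = (n:ℝ) - 1 := by
      rw [Nat.cast_sub (by omega)]; push_cast; ring
    have ha2' : (2:ℝ) ≤ (a:ℝ) := by exact_mod_cast ha2
    have han' : (a:ℝ) ≤ (n:ℝ) - 2 := by
      have : (a:ℝ) + 2 ≤ (n:ℝ) := by exact_mod_cast han
      linarith
    have hk1' : (1:ℝ) ≤ (k:ℝ) := by exact_mod_cast hk1
    have hkn' : (k:ℝ) ≤ (n:ℝ) - 1 := by
      have : (k:ℝ) + 1 ≤ (n:ℝ) := by exact_mod_cast hkn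
      linarith
    have hbr' : (n:ℝ) ≤ (a:ℝ) + (k:ℝ) := by
      have : n ≤ a + k := by omega
      exact_mod_cast this
    have hpoly : (a:ℝ)*((a:ℝ)-1)*((n:ℝ)-1)+((n:ℝ)-(a:ℝ))*((n:ℝ)-(a:ℝ)-1)*((n:ℝ)-1)
        +2*(k:ℝ)*((n:ℝ)-1)
        < (k:ℝ)*((k:ℝ)+(n:ℝ)-1)+(k:ℝ)*((n:ℝ)-(k:ℝ)-1)*(2*(n:ℝ)-3)
          +(k:ℝ)*((k:ℝ)-1)*((n:ℝ)-1)+((n:ℝ)-(k:ℝ)-1)*((n:ℝ)-(k:ℝ)-2)*((n:ℝ)-2) := by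
      exact ineq_branch2 (n:ℝ) (k:ℝ) (a:ℝ) ha2' han' hk1' hkn' hbr'
    calc ∑ e ∈ f1, sw H e + (∑ e ∈ f2, sw H e + ∑ e ∈ f3, sw H e)
        ≤ (a.choose 2 : ℝ) * (Real.sqrt 2 * ((n - 1 : ℕ) : ℝ))
          + ((n-a).choose 2 : ℝ) * (Real.sqrt 2 * ((n - 1 : ℕ) : ℝ))
          + (k : ℝ) * (Real.sqrt 2 * ((n - 1 : ℕ) : ℝ)) := by linarith
      _ = Real.sqrt 2 / 2 * ((a:ℝ)*((a:ℝ)-1)*((n:ℝ)-1)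
          +((n:ℝ)-(a:ℝ))*((n:ℝ)-(a:ℝ)-1)*((n:ℝ)-1)+2*(k:ℝ)*((n:ℝ)-1)) := by
          rw [hc1, hc2, hc4]; ring
      _ < Real.sqrt 2 / 2 * ((k:ℝ)*((k:ℝ)+(n:ℝ)-1)+(k:ℝ)*((n:ℝ)-(k:ℝ)-1)*(2*(n:ℝ)-3)
          +(k:ℝ)*((k:ℝ)-1)*((n:ℝ)-1)+((n:ℝ)-(k:ℝ)-1)*((n:ℝ)-(k:ℝ)-2)*((n:ℝ)-2)) := by
          apply mul_lt_mul_of_pos_left hpoly (by positivity)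
      _ ≤ knkValue n k := knk_lower n k hk1 hkn

/-- The auxiliary supergraph: complete the two sides of the partition. -/
def augment {V : Type*} (G : SimpleGraph V) (A : Set V) : SimpleGraph V where
  Adj u v := u ≠ v ∧ ((u ∈ A ↔ v ∈ A) ∨ G.Adj u v)
  symm := by
    constructor
    rintro u v ⟨h1, h2 | h3⟩
    · exact ⟨h1.symm, Or.inl h2.symm⟩
    · exact ⟨h1.symm, Or.inr h3.symm⟩
  loopless := by constructor; rintro u ⟨h1, _⟩; exact h1 rfl

lemma augment_adj {V : Type*} (G : SimpleGraph V) (A : Set V) (u v : V) :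
    (augment G A).Adj u v ↔ u ≠ v ∧ ((u ∈ A ↔ v ∈ A) ∨ G.Adj u v) := Iff.rfl

lemma le_augment {V : Type*} (G : SimpleGraph V) (A : Set V) : G ≤ augment G A := by
  intro u v h
  exact ⟨h.ne, Or.inr h⟩

end Helpers

/-- Upper bound for the Sombor index of connected graphs on n vertices with
edge connectivity at most k, with equality iff G ≅ K_n^k. -/
theorem somborIndex_le_of_edgeConnAtMost {V : Type*} [Fintype V] (G : SimpleGraph V)
    (hG : G.Connected) (n k : ℕ) (hcard : Fintype.card V = n)
    (hk : 1 ≤ k) (hkn : k ≤ n - 1) (hconn : edgeConnAtMost G k) :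
    somborIndex G ≤ knkValue n k ∧
      (somborIndex G = knkValue n k ↔ Nonempty (G ≃g Knk n k)) := by
  classical
  subst hcard
  set n := Fintype.card V with hn
  obtain ⟨F, hFsub, hFcard, hFdel⟩ := hconn
  have hnV : Nonempty V := hG.nonempty
  have hn1 : 1 ≤ n := Fintype.card_pos
  have hkn' : k + 1 ≤ n := by omega
  obtain ⟨Aset, hAne, hAcne, hAcross⟩ := partition_of_deleteEdges hG hFdel
  set H : SimpleGraph V := augment G Aset with hH
  letI : DecidableRel H.Adj := Classical.decRel _
  have hGH : G ≤ H := le_augment G Aset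
  -- the finset of F
  have hFfin : F.Finite := Set.toFinite F
  set Ffin : Finset (Sym2 V) := hFfin.toFinset with hFfin'
  have hFfincard : #Ffin ≤ k := by
    have h1 : F.ncard = #Ffin := Set.ncard_eq_toFinset_card F hFfin
    have h2 : Nat.card F = F.ncard := Nat.card_coe_set_eq F
    omega
  -- crossing edges of H land in F
  have hHcrossF : ∀ u v : V, H.Adj u v → ¬(u ∈ Aset ↔ v ∈ Aset) → s(u, v) ∈ Ffin := by
    intro u v huv hniff
    have hGadj : G.Adj u v := by
      rcases huv.2 with h | h
      · exact absurd h hniff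
      · exact h
    rw [hFfin', Set.Finite.mem_toFinset]
    by_cases hu : u ∈ Aset
    · have hv : v ∉ Aset := fun hv => hniff ⟨fun _ => hv, fun _ => hu⟩
      exact hAcross u v hGadj hu hv
    · have hv : v ∈ Aset := by
        by_contra hv
        exact hniff ⟨fun h => absurd h hu, fun h => absurd h hv⟩
      rw [Sym2.eq_swap]
      exact hAcross v u hGadj.symm hv hu
  -- the finset version of A
  set A : Finset V := Aset.toFinset with hA
  have hmemA : ∀ v : V, v ∈ A ↔ v ∈ Aset := fun v => Set.mem_toFinset
  have hA1 : 1 ≤ #A := by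
    obtain ⟨x, hx⟩ := hAne
    exact Finset.card_pos.2 ⟨x, (hmemA x).2 hx⟩
  have hAc1 : 1 ≤ #(Aᶜ) := by
    obtain ⟨y, hy⟩ := hAcne
    exact Finset.card_pos.2 ⟨y, Finset.mem_compl.2 (fun hc => hy ((hmemA y).1 hc))⟩
  have hAcard : #(Aᶜ) = n - #A := by rw [Finset.card_compl]
  -- bound on degrees of vertices all of whose H-edges cross
  have hdeg_cross : ∀ x : V, (∀ w, H.Adj x w → ¬(w ∈ Aset ↔ x ∈ Aset)) → H.degree x ≤ k := by
    intro x hx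
    rw [← SimpleGraph.card_neighborFinset_eq_degree]
    calc #(H.neighborFinset x) ≤ #Ffin := by
          apply Finset.card_le_card_of_injOn (fun w => s(x, w))
          · intro w hw
            rw [Finset.mem_coe, SimpleGraph.mem_neighborFinset] at hw
            exact hHcrossF x w hw (fun hiff => (hx w hw) hiff.symm)
          · intro w1 _ w2 _ h
            exact Sym2.congr_right.1 h
      _ ≤ k := hFfincard
  -- the three cases
  have hHmain : somborIndex H ≤ knkValue n k ∧
      (somborIndex H = knkValue n k → Nonempty (H ≃g Knk n k)) := by
    have singleton_case : ∀ x : V, (∀ u v : V, u ≠ x → v ≠ x → u ≠ v → H.Adj u v) →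
        H.degree x ≤ k →
        somborIndex H ≤ knkValue n k ∧
          (somborIndex H = knkValue n k → Nonempty (H ≃g Knk n k)) := by
      intro x hcomp hdegk
      obtain ⟨ψ⟩ := singleton_iso H x hcomp
      set c := H.degree x with hc
      have h1 : somborIndex H = somborIndex (Knk n c) := sombor_iso ψ
      have h2 : somborIndex (Knk n c) ≤ somborIndex (Knk n k) := sombor_mono (knk_mono hdegk)
      have h3 : somborIndex (Knk n k) = knkValue n k := sombor_knk n k hk hkn'
      constructor
      · rw [h1, ← h3]; exact h2
      · intro heq
        have hck : c = k := by
          by_contra hne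
          have hlt : c < k := lt_of_le_of_ne hdegk hne
          have hstrict : somborIndex (Knk n c) < somborIndex (Knk n k) :=
            sombor_strict_mono (knk_mono hdegk) (knk_ne hlt hkn')
          rw [h1] at heq
          rw [← h3] at heq
          linarith
        exact ⟨hck ▸ ψ⟩
    by_cases hA_one : #A = 1
    · obtain ⟨x, hx⟩ := Finset.card_eq_one.1 hA_one
      have hxA : x ∈ Aset := (hmemA x).1 (by rw [hx]; exact Finset.mem_singleton_self x)
      have hcomp : ∀ u v : V, u ≠ x → v ≠ x → u ≠ v → H.Adj u v := by
        intro u v hu hv huv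
        have hu' : u ∉ Aset := fun h => hu (by
          have := (hmemA u).2 h
          rw [hx, Finset.mem_singleton] at this
          exact this)
        have hv' : v ∉ Aset := fun h => hv (by
          have := (hmemA v).2 h
          rw [hx, Finset.mem_singleton] at this
          exact this)
        exact ⟨huv, Or.inl ⟨fun h => absurd h hu', fun h => absurd h hv'⟩⟩
      have hdegk : H.degree x ≤ k := by
        apply hdeg_cross
        intro w hw hiff
        have hwx : w ≠ x := fun h => H.irrefl (h ▸ hw)
        have hwA : w ∈ Aset := hiff.2 hxA
        apply hwx
        have := (hmemA w).2 hwA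
        rw [hx, Finset.mem_singleton] at this
        exact this
      exact singleton_case x hcomp hdegk
    · by_cases hAc_one : #(Aᶜ) = 1
      · obtain ⟨x, hx⟩ := Finset.card_eq_one.1 hAc_one
        have hxA : x ∉ Aset := by
          intro h
          have : x ∈ Aᶜ := by rw [hx]; exact Finset.mem_singleton_self x
          exact Finset.mem_compl.1 this ((hmemA x).2 h)
        have hmemA' : ∀ v : V, v ≠ x → v ∈ Aset := by
          intro v hv
          by_contra hc
          have : v ∈ Aᶜ := Finset.mem_compl.2 (fun h => hc ((hmemA v).1 h))
          rw [hx, Finset.mem_singleton] at this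
          exact hv this
        have hcomp : ∀ u v : V, u ≠ x → v ≠ x → u ≠ v → H.Adj u v := by
          intro u v hu hv huv
          exact ⟨huv, Or.inl ⟨fun _ => hmemA' v hv, fun _ => hmemA' u hu⟩⟩
        have hdegk : H.degree x ≤ k := by
          apply hdeg_cross
          intro w hw hiff
          have hwx : w ≠ x := fun h => H.irrefl (h ▸ hw)
          exact hxA (hiff.1 (hmemA' w hwx))
        exact singleton_case x hcomp hdegk
      · -- crude case
        have ha2 : 2 ≤ #A := by omega
        have han : #A + 2 ≤ n := by omega
        have hdegA : ∀ u ∈ A, H.degree u ≤ #A - 1 + k := by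
          intro u hu
          rw [← SimpleGraph.card_neighborFinset_eq_degree]
          have hsplit := Finset.card_filter_add_card_filter_not
            (s := H.neighborFinset u) (p := fun w => w ∈ A)
          have h1 : #((H.neighborFinset u).filter (fun w => w ∈ A)) ≤ #A - 1 := by
            have : ((H.neighborFinset u).filter (fun w => w ∈ A)) ⊆ A.erase u := by
              intro w hw
              rw [Finset.mem_filter, SimpleGraph.mem_neighborFinset] at hw
              exact Finset.mem_erase.2 ⟨hw.1.ne', hw.2⟩
            calc #((H.neighborFinset u).filter (fun w => w ∈ A)) ≤ #(A.erase u) :=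
                  Finset.card_le_card this
              _ = #A - 1 := Finset.card_erase_of_mem hu
          have h2 : #((H.neighborFinset u).filter (fun w => ¬ w ∈ A)) ≤ k := by
            calc #((H.neighborFinset u).filter (fun w => ¬ w ∈ A)) ≤ #Ffin := by
                  apply Finset.card_le_card_of_injOn (fun w => s(u, w))
                  · intro w hw
                    rw [Finset.mem_coe, Finset.mem_filter, SimpleGraph.mem_neighborFinset] at hw
                    apply hHcrossF u w hw.1
                    intro hiff
                    exact hw.2 ((hmemA w).2 (hiff.1 ((hmemA u).1 hu)))
                  · intro w1 _ w2 _ h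
                    exact Sym2.congr_right.1 h
              _ ≤ k := hFfincard
          omega
        have hcross : #(H.edgeFinset.filter
            (fun e => ¬ bothIn A e = true ∧ ¬ bothIn Aᶜ e = true)) ≤ k := by
          calc #(H.edgeFinset.filter
              (fun e => ¬ bothIn A e = true ∧ ¬ bothIn Aᶜ e = true)) ≤ #Ffin := by
                apply Finset.card_le_card
                intro e he
                rw [Finset.mem_filter] at he
                obtain ⟨he1, he2, he3⟩ := he
                induction e with
                | _ u v =>
                  have hadj : H.Adj u v := (H.mem_edgeSet).1
                    (SimpleGraph.mem_edgeFinset.1 he1)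
                  rw [bothIn_mk] at he2 he3
                  simp only [Finset.mem_compl] at he3
                  apply hHcrossF u v hadj
                  intro hiff
                  by_cases hu : u ∈ A
                  · exact he2 ⟨hu, (hmemA v).2 (hiff.1 ((hmemA u).1 hu))⟩
                  · refine he3 ⟨hu, fun hv => hu ?_⟩
                    exact (hmemA u).2 (hiff.2 ((hmemA v).1 hv))
            _ ≤ k := hFfincard
        have := crude_bound H A rfl ha2 han hk hkn' hdegA hcross
        exact ⟨le_of_lt this, fun heq => absurd heq (ne_of_lt this)⟩
  -- final assembly
  obtain ⟨hHle, hHeq⟩ := hHmain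
  have hGle : somborIndex G ≤ somborIndex H := sombor_mono hGH
  refine ⟨le_trans hGle hHle, ⟨?_, ?_⟩⟩
  · intro heq
    have hGHeq : G = H := by
      by_contra hne
      have := sombor_strict_mono hGH hne
      linarith
    obtain ⟨φ⟩ := hHeq (by rw [← hGHeq]; exact heq)
    exact ⟨hGHeq ▸ φ⟩
  · rintro ⟨φ⟩
    rw [sombor_iso φ, sombor_knk n k hk hkn']
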